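/- Let O ⊂ ℝⁿ be a bounded open set with C¹ boundary, A a constant skew-symmetric matrix, and c ∈ ℝⁿ. If (c + A x) · ν_O(x) ≤ 0 for every x ∈ ∂O (ν_O the inward unit normal), then (c + A x) · ν_O(x) = 0 for every x ∈ ∂O. -/

import Mathlib

open NormedSpace MeasureTheory intervalIntegral
open scoped RealInnerProductSpace

set_option linter.unusedSectionVars false
set_option synthInstance.maxHeartbeats 1000000
set_option maxHeartbeats 1000000

noncomputable section Flow14

variable {F : Type*} [NormedAddCommGroup F] [InnerProductSpace ℝ F] [CompleteSpace F]

/-- Flow of the affine ODE `x' = M x + w`. -/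
noncomputable def flow14 (M : F →L[ℝ] F) (w : F) (t : ℝ) (x : F) : F :=
  exp (t • M) x + ∫ s in (0:ℝ)..t, exp (s • M) w

namespace Flow14

variable (M : F →L[ℝ] F) (w : F)

lemma expR_hasDerivAt (v : F) (t : ℝ) :
    HasDerivAt (fun t : ℝ => exp (t • M) v) (M (exp (t • M) v)) t := by
  have h1 : HasDerivAt (fun u : ℝ => exp (u • M)) (M * exp (t • M)) t :=
    hasDerivAt_exp_smul_const' M t
  simpa using h1.clm_apply (hasDerivAt_const t v)

lemma expR_continuous (v : F) : Continuous (fun t : ℝ => exp (t • M) v) :=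
  Differentiable.continuous (fun t => (expR_hasDerivAt M v t).differentiableAt)

lemma expR_add (s t : ℝ) (v : F) :
    exp ((s + t) • M) v = exp (s • M) (exp (t • M) v) := by
  have hc : Commute (s • M) (t • M) := by
    unfold Commute SemiconjBy
    rw [smul_mul_smul_comm, smul_mul_smul_comm, mul_comm s t]
  have h : exp ((s + t) • M) = exp (s • M) * exp (t • M) := by
    rw [add_smul]
    exact exp_add_of_commute_of_mem_ball (𝕂 := ℝ) (𝔸 := F →L[ℝ] F) hc
      ((expSeries_radius_eq_top ℝ (F →L[ℝ] F)).symm ▸ edist_lt_top _ _)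
      ((expSeries_radius_eq_top ℝ (F →L[ℝ] F)).symm ▸ edist_lt_top _ _)
  rw [h]; rfl

lemma expR_zero_apply (v : F) : exp ((0:ℝ) • M) v = v := by
  simp [exp_zero]

lemma b_hasDerivAt (t : ℝ) :
    HasDerivAt (fun t : ℝ => ∫ s in (0:ℝ)..t, exp (s • M) w) (exp (t • M) w) t :=
  integral_hasDerivAt_right ((expR_continuous M w).intervalIntegrable _ _)
    ((expR_continuous M w).stronglyMeasurableAtFilter volume _) (expR_continuous M w).continuousAt

lemma apply_zero (x : F) : flow14 M w 0 x = x := by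
  simp [flow14, exp_zero]

lemma key (t : ℝ) :
    M (∫ s in (0:ℝ)..t, exp (s • M) w) + w = exp (t • M) w := by
  have hconst := is_const_of_deriv_eq_zero
    (f := fun t : ℝ => M (∫ s in (0:ℝ)..t, exp (s • M) w) + w - exp (t • M) w)
    (fun u => (((M.hasFDerivAt.comp_hasDerivAt u (b_hasDerivAt M w u)).add_const w).sub
        (expR_hasDerivAt M w u)).differentiableAt)
    (fun u => by
      have h := (((M.hasFDerivAt.comp_hasDerivAt u (b_hasDerivAt M w u)).add_const w).sub
          (expR_hasDerivAt M w u))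
      simpa [Pi.sub_def] using h.deriv) t 0
  simp only [intervalIntegral.integral_same, map_zero, zero_add, zero_smul, exp_zero,
    ContinuousLinearMap.one_apply] at hconst
  rw [sub_eq_iff_eq_add] at hconst
  rw [hconst]; abel

lemma hasDerivAt (x : F) (t : ℝ) :
    HasDerivAt (fun t => flow14 M w t x) (M (flow14 M w t x) + w) t := by
  have h1 := (expR_hasDerivAt M x t).add (b_hasDerivAt M w t)
  have h2 : M (flow14 M w t x) + w
      = M (exp (t • M) x) + exp (t • M) w := by
    simp only [flow14, map_add]
    rw [add_assoc, key M w t]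
  rw [h2]
  exact h1

lemma add_apply (s t : ℝ) (x : F) :
    flow14 M w (s + t) x = flow14 M w s (flow14 M w t x) := by
  have hb : (∫ u in (0:ℝ)..(s + t), exp (u • M) w)
      = exp (s • M) (∫ u in (0:ℝ)..t, exp (u • M) w)
        + ∫ u in (0:ℝ)..s, exp (u • M) w := by
    have d1 : ∀ u : ℝ, HasDerivAt (fun t : ℝ => ∫ v in (0:ℝ)..(s + t), exp (v • M) w)
        (exp ((s + u) • M) w) u := by
      intro u
      have hadd : HasDerivAt (fun x : ℝ => s + x) 1 u := by
        simpa using (hasDerivAt_id u).const_add s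
      have h := (b_hasDerivAt M w (s + u)).scomp u hadd
      simpa [Function.comp_def] using h
    have d2 : ∀ u : ℝ, HasDerivAt
        (fun t : ℝ => exp (s • M) (∫ v in (0:ℝ)..t, exp (v • M) w))
        (exp (s • M) (exp (u • M) w)) u := fun u =>
      (exp (s • M)).hasFDerivAt.comp_hasDerivAt u (b_hasDerivAt M w u)
    have hconst := is_const_of_deriv_eq_zero
      (f := fun t : ℝ => (∫ u in (0:ℝ)..(s + t), exp (u • M) w)
        - exp (s • M) (∫ u in (0:ℝ)..t, exp (u • M) w))
      (fun u => ((d1 u).sub (d2 u)).differentiableAt)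
      (fun u => by
        have h := (d1 u).sub (d2 u)
        rw [expR_add M s u w] at h
        simpa [Pi.sub_def] using h.deriv) t 0
    simp only [add_zero, intervalIntegral.integral_same, map_zero, sub_zero] at hconst
    rw [sub_eq_iff_eq_add] at hconst
    rw [hconst]; abel
  simp only [flow14, map_add]
  rw [hb, expR_add M s t x]
  abel


lemma expR_norm_eq (hM : ∀ v : F, ⟪M v, v⟫ = 0) (t : ℝ) (v : F) :
    ‖exp (t • M) v‖ = ‖v‖ := by
  have hconst := is_const_of_deriv_eq_zero
    (f := fun t : ℝ => ⟪exp (t • M) v, exp (t • M) v⟫)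
    (fun u => (((expR_hasDerivAt M v u).inner ℝ (expR_hasDerivAt M v u))).differentiableAt)
    (fun u => by
      have h := (expR_hasDerivAt M v u).inner ℝ (expR_hasDerivAt M v u)
      have h2 : ⟪exp (u • M) v, M (exp (u • M) v)⟫
          + ⟪M (exp (u • M) v), exp (u • M) v⟫ = 0 := by
        rw [real_inner_comm]
        have := hM (exp (u • M) v)
        linarith
      rw [h2] at h
      exact h.deriv) t 0
  simp only [zero_smul, exp_zero, ContinuousLinearMap.one_apply] at hconst
  have h1 : ‖exp (t • M) v‖ * ‖exp (t • M) v‖ = ‖v‖ * ‖v‖ := by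
    rw [← real_inner_self_eq_norm_mul_norm, ← real_inner_self_eq_norm_mul_norm]
    exact hconst
  exact (mul_self_inj_of_nonneg (norm_nonneg _) (norm_nonneg _)).1 h1

/-- `exp (t • M)` as a linear isometry equivalence, when `M` is skew-adjoint. -/
noncomputable def expIso (hM : ∀ v : F, ⟪M v, v⟫ = 0) (t : ℝ) : F ≃ₗᵢ[ℝ] F :=
  { LinearEquiv.ofLinearMap (re₁₂ := RingHomInvPair.ids) (re₂₁ := RingHomInvPair.ids) (exp (t • M) : F →L[ℝ] F).toLinearMap
      (exp ((-t) • M) : F →L[ℝ] F).toLinearMap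
      (by ext v
          simp only [LinearMap.coe_comp, ContinuousLinearMap.coe_coe, Function.comp_apply,
            LinearMap.id_coe, id_eq]
          rw [← expR_add M t (-t) v]
          simp [exp_zero]
          )
      (by ext v
          simp only [LinearMap.coe_comp, ContinuousLinearMap.coe_coe, Function.comp_apply,
            LinearMap.id_coe, id_eq]
          rw [← expR_add M (-t) t v]
          simp [exp_zero]) with
    norm_map' := expR_norm_eq M hM t }

lemma expIso_apply (hM : ∀ v : F, ⟪M v, v⟫ = 0) (t : ℝ) (v : F) :
    expIso M hM t v = exp (t • M) v := rfl

lemma continuous_flow (t : ℝ) : Continuous (fun x => flow14 M w t x) :=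
  ((exp (t • M)).continuous).add continuous_const

lemma measurePreserving [FiniteDimensional ℝ F] [MeasurableSpace F] [BorelSpace F]
    (hM : ∀ v : F, ⟪M v, v⟫ = 0) (t : ℝ) :
    MeasurePreserving (flow14 M w t) (volume : Measure F) volume := by
  have h1 : MeasurePreserving (fun x : F => exp (t • M) x) (volume : Measure F) volume :=
    (expIso M hM t).measurePreserving
  have h2 : MeasurePreserving
      (fun x : F => x + ∫ s in (0:ℝ)..t, exp (s • M) w) (volume : Measure F) volume :=
    measurePreserving_add_right volume _
  exact h2.comp h1

lemma dist_eq (hM : ∀ v : F, ⟪M v, v⟫ = 0) (t : ℝ) (x y : F) :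
    dist (flow14 M w t x) (flow14 M w t y) = dist x y := by
  rw [dist_eq_norm, dist_eq_norm]
  have h : flow14 M w t x - flow14 M w t y = exp (t • M) (x - y) := by
    simp only [flow14, map_sub]
    abel
  rw [h, expR_norm_eq M hM t]

lemma left_inverse (t : ℝ) (x : F) : flow14 M w (-t) (flow14 M w t x) = x := by
  rw [← add_apply, neg_add_cancel, apply_zero]

end Flow14

end Flow14

open Matrix Metric Filter Set
open scoped RealInnerProductSpace Topology

/-- Let `O ⊆ ℝⁿ` be a bounded open set with `C¹` boundary (given by a regular
defining function `f`, with inward unit normal `ν = -∇f/‖∇f‖` on `∂O`), let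
`A` be a constant skew-symmetric matrix and `c ∈ ℝⁿ`. If
`(c + A x) ⬝ ν(x) ≤ 0` for every `x ∈ ∂O`, then `(c + A x) ⬝ ν(x) = 0` for
every `x ∈ ∂O`. -/
theorem stmt14 {n : ℕ} (A : Matrix (Fin n) (Fin n) ℝ) (hA : Aᵀ = -A)
    (c : EuclideanSpace ℝ (Fin n)) (O : Set (EuclideanSpace ℝ (Fin n)))
    (hOo : IsOpen O) (hOb : Bornology.IsBounded O)
    (f : EuclideanSpace ℝ (Fin n) → ℝ) (hf : ContDiff ℝ 1 f)
    (hOf : O = {x | f x < 0}) (hfr : frontier O = {x | f x = 0})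
    (hreg : ∀ x ∈ frontier O, gradient f x ≠ 0)
    (ν : EuclideanSpace ℝ (Fin n) → EuclideanSpace ℝ (Fin n))
    (hν : ∀ x ∈ frontier O, ν x = -(‖gradient f x‖)⁻¹ • gradient f x)
    (hsign : ∀ x ∈ frontier O, ⟪c + Matrix.toEuclideanLin A x, ν x⟫ ≤ 0) :
    ∀ x ∈ frontier O, ⟪c + Matrix.toEuclideanLin A x, ν x⟫ = 0 := by
  intro x₀ hx₀
  by_contra hne
  -- the linear part as a continuous linear map, and its skewness
  set L : EuclideanSpace ℝ (Fin n) →L[ℝ] EuclideanSpace ℝ (Fin n) := LinearMap.toContinuousLinearMap (Matrix.toEuclideanLin A) with hLdef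
  have hLapp : ∀ x : EuclideanSpace ℝ (Fin n), L x = Matrix.toEuclideanLin A x := fun x => rfl
  have hskew : ∀ v : EuclideanSpace ℝ (Fin n), ⟪L v, v⟫ = 0 := by
    intro v
    have h1 : ⟪v, Matrix.toEuclideanLin Aᴴ v⟫ = ⟪Matrix.toEuclideanLin A v, v⟫ := by
      rw [Matrix.toEuclideanLin_conjTranspose_eq_adjoint]
      exact LinearMap.adjoint_inner_right _ _ _
    rw [Matrix.conjTranspose_eq_transpose_of_trivial, hA, map_neg] at h1
    simp only [LinearMap.neg_apply, inner_neg_right] at h1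
    have h2 : ⟪Matrix.toEuclideanLin A v, v⟫ = ⟪v, Matrix.toEuclideanLin A v⟫ :=
      real_inner_comm _ _
    rw [hLapp]
    linarith
  -- the vector field W x = M x + w = -(c + A x), and its flow
  set M : EuclideanSpace ℝ (Fin n) →L[ℝ] EuclideanSpace ℝ (Fin n) := -L with hMdef
  have hM : ∀ v : EuclideanSpace ℝ (Fin n), ⟪M v, v⟫ = 0 := by
    intro v
    simp only [hMdef, ContinuousLinearMap.neg_apply, inner_neg_left]
    rw [hskew v]; ring
  set w : EuclideanSpace ℝ (Fin n) := -c with hwdef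
  have hfield : ∀ x : EuclideanSpace ℝ (Fin n), M x + w = -(c + Matrix.toEuclideanLin A x) := by
    intro x
    simp only [hMdef, hwdef, ContinuousLinearMap.neg_apply, hLapp]
    abel
  set ψ : ℝ → EuclideanSpace ℝ (Fin n) → EuclideanSpace ℝ (Fin n) := flow14 M w with hψdef
  have hψ0 : ∀ x : EuclideanSpace ℝ (Fin n), ψ 0 x = x := Flow14.apply_zero M w
  have hψd : ∀ (x : EuclideanSpace ℝ (Fin n)) (t : ℝ), HasDerivAt (fun t => ψ t x) (M (ψ t x) + w) t :=
    fun x t => Flow14.hasDerivAt M w x t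
  have hψadd : ∀ (s t : ℝ) (x : EuclideanSpace ℝ (Fin n)), ψ (s + t) x = ψ s (ψ t x) := Flow14.add_apply M w
  have hψcont : ∀ t : ℝ, Continuous (ψ t) := fun t => Flow14.continuous_flow M w t
  have hψmp : ∀ t : ℝ, MeasureTheory.MeasurePreserving (ψ t)
      (MeasureTheory.volume : MeasureTheory.Measure (EuclideanSpace ℝ (Fin n))) MeasureTheory.volume :=
    fun t => Flow14.measurePreserving M w hM t
  have hψtc : ∀ x : EuclideanSpace ℝ (Fin n), Continuous (fun t => ψ t x) :=
    fun x => Differentiable.continuous (fun t => (hψd x t).differentiableAt)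
  have hψdist : ∀ (t : ℝ) (x y : EuclideanSpace ℝ (Fin n)), dist (ψ t x) (ψ t y) = dist x y :=
    fun t x y => Flow14.dist_eq M w hM t x y
  have hψinv : ∀ (t : ℝ) (x : EuclideanSpace ℝ (Fin n)), ψ (-t) (ψ t x) = x := fun t x => Flow14.left_inverse M w t x
  -- analytic facts about f
  have hfc : Continuous f := hf.continuous
  have hfdiff : ∀ x : EuclideanSpace ℝ (Fin n), HasFDerivAt f (fderiv ℝ f x) x :=
    fun x => (hf.differentiable one_ne_zero x).hasFDerivAt
  have hgrad : ∀ x v : EuclideanSpace ℝ (Fin n), ⟪gradient f x, v⟫ = fderiv ℝ f x v := by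
    intro x v
    unfold gradient
    exact InnerProductSpace.toDual_symm_apply
  have hfd : ∀ (x : EuclideanSpace ℝ (Fin n)) (t : ℝ),
      HasDerivAt (fun t => f (ψ t x)) (fderiv ℝ f (ψ t x) (M (ψ t x) + w)) t :=
    fun x t => (hfdiff (ψ t x)).comp_hasDerivAt t (hψd x t)
  -- the compact set K = closure O = {f ≤ 0}
  set K : Set (EuclideanSpace ℝ (Fin n)) := {x : EuclideanSpace ℝ (Fin n) | f x ≤ 0} with hKdef
  have hKclosed : IsClosed K := isClosed_le hfc continuous_const
  have hOK : O ⊆ K := by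
    intro x hx
    rw [hOf] at hx
    exact le_of_lt (show f x < 0 from hx)
  have hclO : closure O = K := by
    apply subset_antisymm (closure_minimal hOK hKclosed)
    intro x hx
    rcases lt_or_eq_of_le (show f x ≤ 0 from hx) with h | h
    · exact subset_closure (by rw [hOf]; exact h)
    · have hxf : x ∈ frontier O := by rw [hfr]; exact (show f x = 0 from h)
      exact frontier_subset_closure hxf
  have hKcpt : IsCompact K := by
    rw [← hclO]
    exact Metric.isCompact_of_isClosed_isBounded isClosed_closure hOb.closure
  -- boundary sign facts
  have hbd : ∀ y : EuclideanSpace ℝ (Fin n), f y = 0 → gradient f y ≠ 0 ∧ fderiv ℝ f y (M y + w) ≤ 0 := by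
    intro y hy
    have hyfr : y ∈ frontier O := by rw [hfr]; exact hy
    have hgne := hreg y hyfr
    refine ⟨hgne, ?_⟩
    have hs := hsign y hyfr
    rw [hν y hyfr, real_inner_smul_right] at hs
    have hgn : (0:ℝ) < ‖gradient f y‖ := norm_pos_iff.2 hgne
    have hinn : 0 ≤ ⟪c + Matrix.toEuclideanLin A y, gradient f y⟫ := by
      by_contra hcon
      push_neg at hcon
      have : 0 < -(‖gradient f y‖)⁻¹ * ⟪c + Matrix.toEuclideanLin A y, gradient f y⟫ :=
        mul_pos_of_neg_of_neg (neg_lt_zero.mpr (inv_pos.2 hgn)) hcon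
      linarith
    have heq : fderiv ℝ f y (M y + w) = -⟪c + Matrix.toEuclideanLin A y, gradient f y⟫ := by
      rw [← hgrad, hfield, inner_neg_right, real_inner_comm]
    rw [heq]
    linarith
  -- pointwise outer estimate at boundary points
  have hEst : ∀ y : EuclideanSpace ℝ (Fin n), f y = 0 → ∀ θ : ℝ, 0 < θ →
      ∀ᶠ h in 𝓝[>] (0:ℝ), Metric.infDist (ψ h y) K ≤ θ * h := by
    intro y hy θ hθ
    obtain ⟨hgne, hsle⟩ := hbd y hy
    have hgn : (0:ℝ) < ‖gradient f y‖ := norm_pos_iff.2 hgne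
    set u : EuclideanSpace ℝ (Fin n) := ‖gradient f y‖⁻¹ • gradient f y with hudef
    have hu : ‖u‖ = 1 := by
      rw [hudef, norm_smul, norm_inv, norm_norm]
      field_simp
    set z : ℝ → EuclideanSpace ℝ (Fin n) := fun h => ψ h y - (θ * h) • u with hzdef
    have hz0 : z 0 = y := by simp [hzdef, hψ0 y]
    have hzd : HasDerivAt z (M (ψ 0 y) + w - θ • u) 0 := by
      have h2 : HasDerivAt (fun h : ℝ => (θ * h) • u) (θ • u) 0 := by
        have h3 : HasDerivAt (fun h : ℝ => θ * h) θ 0 := by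
          simpa using (hasDerivAt_id (0:ℝ)).const_mul θ
        simpa using h3.smul_const u
      exact (hψd y 0).sub h2
    have hF : HasDerivAt (fun h : ℝ => f (z h)) (fderiv ℝ f y (M y + w - θ • u)) 0 := by
      have h4 := (hfdiff (z 0)).comp_hasDerivAt 0 hzd
      rw [hz0] at h4
      rw [hψ0 y] at h4
      exact h4
    have hneg : fderiv ℝ f y (M y + w - θ • u) < 0 := by
      have h5 : fderiv ℝ f y (M y + w - θ • u)
          = fderiv ℝ f y (M y + w) - θ * fderiv ℝ f y u := by
        rw [map_sub, ContinuousLinearMap.map_smul]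
        simp [smul_eq_mul]
      have h6 : fderiv ℝ f y u = ‖gradient f y‖ := by
        rw [← hgrad, hudef, real_inner_smul_right, real_inner_self_eq_norm_mul_norm]
        field_simp
      rw [h5, h6]
      nlinarith
    have hslope : Filter.Tendsto (slope (fun h : ℝ => f (z h)) 0) (𝓝[≠] (0:ℝ))
        (𝓝 (fderiv ℝ f y (M y + w - θ • u))) := by
      rw [hasDerivAt_iff_tendsto_slope] at hF
      exact hF
    have hev : ∀ᶠ h in 𝓝[≠] (0:ℝ), slope (fun h : ℝ => f (z h)) 0 h < 0 :=
      hslope.eventually_lt_const hneg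
    have hev' : ∀ᶠ h in 𝓝[>] (0:ℝ), slope (fun h : ℝ => f (z h)) 0 h < 0 :=
      hev.filter_mono (nhdsWithin_mono 0 (fun x hx => ne_of_gt hx))
    filter_upwards [hev', self_mem_nhdsWithin] with h hsl hpos
    have hpos' : (0:ℝ) < h := hpos
    have hfz : f (z h) < 0 := by
      have : slope (fun h : ℝ => f (z h)) 0 h = f (z h) / h := by
        rw [slope_def_field]
        rw [hz0, hy]
        field_simp
        rw [sub_zero, sub_zero, mul_div_assoc, div_self hpos'.ne', mul_one]
      rw [this] at hsl
      have := (div_neg_iff).1 hsl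
      rcases this with ⟨h1, _⟩ | ⟨h1, h2⟩
      · linarith [h1]
      · linarith
    have hzK : z h ∈ K := le_of_lt hfz
    have hdiffz : ψ h y - z h = (θ * h) • u := by
      simp only [hzdef]
      abel
    calc Metric.infDist (ψ h y) K ≤ dist (ψ h y) (z h) := Metric.infDist_le_dist_of_mem hzK
      _ = ‖(θ * h) • u‖ := by rw [dist_eq_norm, hdiffz]
      _ = θ * h := by
          rw [norm_smul, hu, mul_one, Real.norm_of_nonneg (by positivity)]
  -- forward invariance of K under the flow (Nagumo)
  have hInv : ∀ x ∈ K, ∀ T : ℝ, 0 ≤ T → ψ T x ∈ K := by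
    intro x hx T hT
    have hKne : K.Nonempty := ⟨x, hx⟩
    set δ : ℝ → ℝ := fun t => Metric.infDist (ψ t x) K with hδdef
    have hδcont : Continuous δ := (Metric.continuous_infDist_pt K).comp (hψtc x)
    have hδnn : ∀ t, 0 ≤ δ t := fun t => Metric.infDist_nonneg
    have key : ∀ t ∈ Set.Icc (0:ℝ) T, δ t ≤ 0 := by
      apply image_le_of_liminf_slope_right_le_deriv_boundary
        (B := fun _ => (0:ℝ)) (B' := fun _ => (0:ℝ)) hδcont.continuousOn
      · simp only [hδdef, hψ0 x]
        exact le_of_eq (Metric.infDist_zero_of_mem hx)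
      · exact continuousOn_const
      · intro t _
        exact hasDerivWithinAt_const t _ 0
      · intro t _ r hr
        -- three cases according to position of ψ t x
        have main : ∀ᶠ ζ in 𝓝[>] t, slope δ t ζ < r := by
          rcases lt_trichotomy (f (ψ t x)) 0 with hlt | heq0 | hgt
          · -- interior point : δ vanishes near t
            have hδt : δ t = 0 := Metric.infDist_zero_of_mem (le_of_lt hlt)
            have hopen : IsOpen {ζ : ℝ | f (ψ ζ x) < 0} :=
              isOpen_lt (hfc.comp (hψtc x)) continuous_const
            have hmem : ∀ᶠ ζ in 𝓝 t, f (ψ ζ x) < 0 := hopen.mem_nhds hlt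
            filter_upwards [nhdsWithin_le_nhds hmem] with ζ hζ
            have : δ ζ = 0 := Metric.infDist_zero_of_mem (le_of_lt hζ)
            rw [slope_def_field, this, hδt]
            simpa using hr
          · -- boundary point
            have hδt : δ t = 0 := Metric.infDist_zero_of_mem (le_of_eq heq0)
            have hev := hEst (ψ t x) heq0 (r/2) (half_pos hr)
            have hmap : Filter.Tendsto (fun ζ : ℝ => ζ - t) (𝓝[>] t) (𝓝[>] (0:ℝ)) := by
              apply tendsto_nhdsWithin_of_tendsto_nhds_of_eventually_within
              · have h10 : Filter.Tendsto (fun ζ : ℝ => ζ - t) (𝓝 t) (𝓝 (t - t)) :=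
                  (continuous_id.sub continuous_const).tendsto t
                rw [sub_self] at h10
                exact h10.mono_left nhdsWithin_le_nhds
              · filter_upwards [self_mem_nhdsWithin] with ζ hζ
                exact sub_pos.2 (Set.mem_Ioi.1 hζ)
            filter_upwards [hmap.eventually hev, self_mem_nhdsWithin] with ζ hζ hζt
            have hζt' : t < ζ := hζt
            have hψζ : ψ ζ x = ψ (ζ - t) (ψ t x) := by
              rw [← hψadd (ζ - t) t x, sub_add_cancel]
            have hδζ : δ ζ ≤ (r/2) * (ζ - t) := by
              rw [hδdef]
              simp only
              rw [hψζ]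
              exact hζ
            rw [slope_def_field, hδt, sub_zero]
            have h7 : δ ζ / (ζ - t) ≤ r/2 := by
              rw [div_le_iff₀ (by linarith)]
              linarith
            calc δ ζ / (ζ - t) ≤ r/2 := h7
              _ < r := by linarith
          · -- exterior point : use nearest point on the boundary
            obtain ⟨y, hyK, hyd⟩ := hKcpt.exists_infDist_eq_dist hKne (ψ t x)
            have hfy : f y = 0 := by
              rcases lt_or_eq_of_le (show f y ≤ 0 from hyK) with hylt | hyeq
              · exfalso
                set p := ψ t x with hpdef
                have hpK : p ∉ K := by
                  intro hpK
                  exact absurd (show f p ≤ 0 from hpK) (by linarith)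
                have hpy : 0 < dist p y := by
                  rw [dist_pos]
                  intro hcon
                  exact hpK (hcon ▸ hyK)
                have hg2 : Continuous (fun s : ℝ => f (y + s • (p - y))) :=
                  hfc.comp (continuous_const.add (continuous_id.smul continuous_const))
                have h01 : (0:ℝ) ∈ Set.Ioo (f (y + (0:ℝ) • (p - y))) (f (y + (1:ℝ) • (p - y))) := by
                  constructor
                  · simpa using hylt
                  · simpa using hgt
                obtain ⟨s, hs01, hgs⟩ := intermediate_value_Ioo (by norm_num : (0:ℝ) ≤ 1)
                  hg2.continuousOn h01
                have hy'K : y + s • (p - y) ∈ K := le_of_eq hgs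
                have hlt2 : dist p (y + s • (p - y)) < dist p y := by
                  rw [dist_eq_norm, dist_eq_norm]
                  have : p - (y + s • (p - y)) = (1 - s) • (p - y) := by
                    rw [sub_smul, one_smul]
                    abel
                  rw [this, norm_smul, Real.norm_of_nonneg (by linarith [hs01.2])]
                  have hpy' : 0 < ‖p - y‖ := by rwa [dist_eq_norm] at hpy
                  nlinarith [hs01.1, hs01.2]
                have hge : dist p y ≤ dist p (y + s • (p - y)) := by
                  rw [← hyd]
                  exact Metric.infDist_le_dist_of_mem hy'K
                linarith
              · exact hyeq
            have hev := hEst y hfy (r/2) (half_pos hr)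
            have hmap : Filter.Tendsto (fun ζ : ℝ => ζ - t) (𝓝[>] t) (𝓝[>] (0:ℝ)) := by
              apply tendsto_nhdsWithin_of_tendsto_nhds_of_eventually_within
              · have h10 : Filter.Tendsto (fun ζ : ℝ => ζ - t) (𝓝 t) (𝓝 (t - t)) :=
                  (continuous_id.sub continuous_const).tendsto t
                rw [sub_self] at h10
                exact h10.mono_left nhdsWithin_le_nhds
              · filter_upwards [self_mem_nhdsWithin] with ζ hζ
                exact sub_pos.2 (Set.mem_Ioi.1 hζ)
            filter_upwards [hmap.eventually hev, self_mem_nhdsWithin] with ζ hζ hζt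
            have hζt' : t < ζ := hζt
            have hψζ : ψ ζ x = ψ (ζ - t) (ψ t x) := by
              rw [← hψadd (ζ - t) t x, sub_add_cancel]
            have hδζ : δ ζ ≤ δ t + (r/2) * (ζ - t) := by
              have h8 : δ ζ ≤ Metric.infDist (ψ (ζ - t) y) K
                  + dist (ψ (ζ - t) (ψ t x)) (ψ (ζ - t) y) := by
                rw [hδdef]; simp only; rw [hψζ]
                exact Metric.infDist_le_infDist_add_dist
              rw [hψdist (ζ - t) (ψ t x) y] at h8
              have h9 : dist (ψ t x) y = δ t := hyd.symm
              rw [h9] at h8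
              linarith [hζ]
            rw [slope_def_field]
            rw [div_lt_iff₀ (by linarith)]
            have : r * (ζ - t) > (r/2) * (ζ - t) := by nlinarith
            linarith
        exact main.frequently
    have hδT : δ T = 0 := le_antisymm (key T ⟨hT, le_rfl⟩) (hδnn T)
    exact (hKclosed.mem_iff_infDist_zero hKne).2 hδT
  -- volume argument : O ⊆ ψ T '' K for T ≥ 0
  have hback : ∀ T : ℝ, 0 ≤ T → ∀ z ∈ closure O, ψ (-T) z ∈ K := by
    intro T hT
    have hIK : ψ T '' K ⊆ K := by
      rintro _ ⟨k, hk, rfl⟩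
      exact hInv k hk T hT
    have hIcpt : IsCompact (ψ T '' K) := hKcpt.image (hψcont T)
    have hIm : ψ T '' K = ψ (-T) ⁻¹' K := by
      ext ζ
      constructor
      · rintro ⟨k, hk, rfl⟩
        have : ψ (-T) (ψ T k) = k := hψinv T k
        simpa [Set.mem_preimage, this] using hk
      · intro hζ
        refine ⟨ψ (-T) ζ, hζ, ?_⟩
        have h11 : ψ (T + -T) ζ = ψ T (ψ (-T) ζ) := hψadd T (-T) ζ
        rw [add_neg_cancel, hψ0] at h11
        exact h11.symm
    have hvol : MeasureTheory.volume (ψ T '' K) = MeasureTheory.volume K := by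
      rw [hIm]
      exact (hψmp (-T)).measure_preimage hKclosed.measurableSet.nullMeasurableSet
    have hdiff0 : MeasureTheory.volume (K \ ψ T '' K) = 0 := by
      rw [MeasureTheory.measure_diff hIK hIcpt.isClosed.measurableSet.nullMeasurableSet
        (by rw [hvol]; exact hKcpt.measure_lt_top.ne), hvol, tsub_self]
    have hOsub : O ⊆ ψ T '' K := by
      by_contra hcon
      rw [Set.not_subset] at hcon
      obtain ⟨ζ, hζO, hζI⟩ := hcon
      have hSopen : IsOpen (O \ ψ T '' K) := hOo.sdiff hIcpt.isClosed
      have hS0 : MeasureTheory.volume (O \ ψ T '' K) = 0 :=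
        MeasureTheory.measure_mono_null (Set.diff_subset_diff_left hOK) hdiff0
      have hSpos : 0 < MeasureTheory.volume (O \ ψ T '' K) :=
        hSopen.measure_pos MeasureTheory.volume ⟨ζ, hζO, hζI⟩
      rw [hS0] at hSpos
      exact lt_irrefl 0 hSpos
    have hmaps : Set.MapsTo (ψ (-T)) O K := by
      intro ζ hζ
      obtain ⟨k, hk, rfl⟩ := hOsub hζ
      have : ψ (-T) (ψ T k) = k := hψinv T k
      rw [this]
      exact hk
    have := hmaps.closure_left (hψcont (-T)) hKclosed
    intro z hz
    exact this hz
  -- final contradiction at x₀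
  have hx₀f : f x₀ = 0 := by rw [hfr] at hx₀; exact hx₀
  have hx₀cl : x₀ ∈ closure O := frontier_subset_closure hx₀
  have hVg : 0 < ⟪c + Matrix.toEuclideanLin A x₀, gradient f x₀⟫ := by
    have hs := hsign x₀ hx₀
    have hgn : (0:ℝ) < ‖gradient f x₀‖ := norm_pos_iff.2 (hreg x₀ hx₀)
    rw [hν x₀ hx₀, real_inner_smul_right] at hs
    rcases lt_trichotomy (⟪c + Matrix.toEuclideanLin A x₀, gradient f x₀⟫ : ℝ) 0 with h | h | h
    · exfalso
      have : 0 < -(‖gradient f x₀‖)⁻¹ * ⟪c + Matrix.toEuclideanLin A x₀, gradient f x₀⟫ :=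
        mul_pos_of_neg_of_neg (neg_lt_zero.mpr (inv_pos.2 hgn)) h
      linarith
    · exfalso
      apply hne
      rw [hν x₀ hx₀, real_inner_smul_right, h, mul_zero]
    · have : -(‖gradient f x₀‖)⁻¹ < 0 := neg_lt_zero.mpr (inv_pos.2 hgn)
      nlinarith
  have hder : fderiv ℝ f x₀ (M x₀ + w) < 0 := by
    have heq : fderiv ℝ f x₀ (M x₀ + w) = -⟪c + Matrix.toEuclideanLin A x₀, gradient f x₀⟫ := by
      rw [← hgrad, hfield, inner_neg_right, real_inner_comm]
    rw [heq]
    linarith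
  have hg3 : HasDerivAt (fun t => f (ψ t x₀)) (fderiv ℝ f x₀ (M x₀ + w)) 0 := by
    have := hfd x₀ 0
    rw [hψ0 x₀] at this
    exact this
  rw [hasDerivAt_iff_tendsto_slope] at hg3
  have hev : ∀ᶠ h in 𝓝[≠] (0:ℝ), slope (fun t => f (ψ t x₀)) 0 h < 0 :=
    hg3.eventually_lt_const hder
  have hev' : ∀ᶠ h in 𝓝[<] (0:ℝ), slope (fun t => f (ψ t x₀)) 0 h < 0 :=
    hev.filter_mono (nhdsWithin_mono 0 (fun ζ hζ => ne_of_lt hζ))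
  obtain ⟨t₁, ht₁s, ht₁n⟩ := (hev'.and self_mem_nhdsWithin).exists
  have ht₁neg : t₁ < 0 := ht₁n
  have hgt : 0 < f (ψ t₁ x₀) := by
    rw [slope_def_field, hψ0 x₀, hx₀f, sub_zero, sub_zero] at ht₁s
    rcases (div_neg_iff).1 ht₁s with ⟨h1, h2⟩ | ⟨h1, h2⟩
    · linarith
    · linarith
  have hmem : ψ t₁ x₀ ∈ K := by
    have := hback (-t₁) (by linarith) x₀ hx₀cl
    rwa [neg_neg] at this
  exact absurd (show f (ψ t₁ x₀) ≤ 0 from hmem) (by linarith)
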